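/- Let g, h : ℝ → ℝ be C¹ functions and a < b. Then the sup-norm of the difference of the derivatives of the convex envelopes on [a,b] is bounded by the sup-norm of the difference of the derivatives: ‖(conv_{[a,b]} g)' − (conv_{[a,b]} h)'‖_{L∞([a,b])} ≤ ‖g' − h'‖_{L∞([a,b])}. -/

import Mathlib

open Set Filter Topology

/-- The convex envelope of `g` on the interval `[a,b]`: the pointwise supremum of all
convex functions on `[a,b]` lying below `g` on `[a,b]`. -/
noncomputable def convEnv (a b : ℝ) (g : ℝ → ℝ) : ℝ → ℝ :=
  fun u => sSup {y : ℝ | ∃ h : ℝ → ℝ, ConvexOn ℝ (Set.Icc a b) h ∧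
    (∀ x ∈ Set.Icc a b, h x ≤ g x) ∧ y = h u}

/-! ### Helpers -/

lemma neBot_Ioo_right {u b : ℝ} (h : u < b) : (𝓝[Ioo u b] u).NeBot := by
  rw [← mem_closure_iff_nhdsWithin_neBot, closure_Ioo h.ne]
  exact ⟨le_rfl, h.le⟩

lemma neBot_Ioo_left {a u : ℝ} (h : a < u) : (𝓝[Ioo a u] u).NeBot := by
  rw [← mem_closure_iff_nhdsWithin_neBot, closure_Ioo h.ne]
  exact ⟨h.le, le_rfl⟩

lemma tendsto_slope_sub {a b u m : ℝ} {E : ℝ → ℝ} {s : Set ℝ}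
    (hsub : s ⊆ Icc a b \ {u}) (hE : HasDerivWithinAt E m (Icc a b) u) :
    Tendsto (fun t => (E t - E u) / (t - u)) (𝓝[s] u) (𝓝 m) := by
  have h := hasDerivWithinAt_iff_tendsto_slope.mp hE
  have h2 := h.mono_left (nhdsWithin_mono _ hsub)
  have : (fun t => (E t - E u) / (t - u)) = slope E u := by
    funext t; rw [slope_def_field]
  rw [this]; exact h2

lemma convexOn_affine (A B : ℝ) {s : Set ℝ} (hs : Convex ℝ s) :
    ConvexOn ℝ s (fun x => A * x + B) := by
  refine ⟨hs, fun x _ y _ p q hp hq hpq => le_of_eq ?_⟩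
  simp only [smul_eq_mul]
  linear_combination (-B) * hpq

/-- derivative within at `u` is at most the right slope -/
lemma deriv_le_slope_right {a b u s mu : ℝ} {E : ℝ → ℝ}
    (hconv : ConvexOn ℝ (Icc a b) E)
    (hu : u ∈ Icc a b) (hs : s ∈ Icc a b) (hus : u < s)
    (hmE : HasDerivWithinAt E mu (Icc a b) u) :
    mu ≤ (E s - E u) / (s - u) := by
  have hsub : Ioo u s ⊆ Icc a b \ {u} := fun x hx =>
    ⟨⟨hu.1.trans hx.1.le, hx.2.le.trans hs.2⟩, ne_of_gt hx.1⟩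
  have hten := tendsto_slope_sub hsub hmE
  have : (𝓝[Ioo u s] u).NeBot := neBot_Ioo_right hus
  refine le_of_tendsto hten ?_
  refine eventually_nhdsWithin_of_forall (fun t ht => ?_)
  have htmem : t ∈ Icc a b := ⟨hu.1.trans ht.1.le, ht.2.le.trans hs.2⟩
  exact hconv.secant_mono hu htmem hs (ne_of_gt ht.1) (ne_of_gt hus) ht.2.le

/-- the left slope is at most the derivative within at `u` -/
lemma slope_left_le_deriv {a b u t mu : ℝ} {E : ℝ → ℝ}
    (hconv : ConvexOn ℝ (Icc a b) E)
    (hu : u ∈ Icc a b) (ht : t ∈ Icc a b) (htu : t < u)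
    (hmE : HasDerivWithinAt E mu (Icc a b) u) :
    (E u - E t) / (u - t) ≤ mu := by
  have hsub : Ioo t u ⊆ Icc a b \ {u} := fun x hx =>
    ⟨⟨ht.1.trans hx.1.le, hx.2.le.trans hu.2⟩, ne_of_lt hx.2⟩
  have hten := tendsto_slope_sub hsub hmE
  have : (𝓝[Ioo t u] u).NeBot := neBot_Ioo_left htu
  refine ge_of_tendsto hten ?_
  refine eventually_nhdsWithin_of_forall (fun x hx => ?_)
  have hxmem : x ∈ Icc a b := ⟨ht.1.trans hx.1.le, hx.2.le.trans hu.2⟩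
  have h1 : (E u - E t) / (u - t) ≤ (E u - E x) / (u - x) := by
    have := hconv.secant_mono hu ht hxmem (ne_of_lt htu) (ne_of_lt hx.2) hx.1.le
    calc (E u - E t) / (u - t) = (E t - E u) / (t - u) := by
          rw [← neg_div_neg_eq]; ring_nf
      _ ≤ (E x - E u) / (x - u) := this
      _ = (E u - E x) / (u - x) := by rw [← neg_div_neg_eq]; ring_nf
  have h2 : (E u - E x) / (u - x) = (E x - E u) / (x - u) := by
    rw [← neg_div_neg_eq]; ring_nf
  linarith [h1, h2.symm.le]

/-- At a contact point `u < b`, the envelope derivative is at most `deriv g u`. -/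
lemma contact_deriv_le {a b u mu : ℝ} {E g : ℝ → ℝ}
    (hg : ContDiff ℝ 1 g)
    (hEle : ∀ x ∈ Icc a b, E x ≤ g x)
    (hu : u ∈ Icc a b) (hub : u < b) (hcon : E u = g u)
    (hmE : HasDerivWithinAt E mu (Icc a b) u) :
    mu ≤ deriv g u := by
  have hsub : Ioo u b ⊆ Icc a b \ {u} := fun x hx =>
    ⟨⟨hu.1.trans hx.1.le, hx.2.le⟩, ne_of_gt hx.1⟩
  have htenE := tendsto_slope_sub hsub hmE
  have hgd : HasDerivAt g (deriv g u) u :=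
    ((hg.differentiable one_ne_zero) u).hasDerivAt
  have htenG : Tendsto (fun t => (g t - g u) / (t - u)) (𝓝[Ioo u b] u) (𝓝 (deriv g u)) := by
    have h := hasDerivAt_iff_tendsto_slope.mp hgd
    have h2 := h.mono_left (nhdsWithin_mono _ (fun x hx => ne_of_gt hx.1 : Ioo u b ⊆ {u}ᶜ))
    have : (fun t => (g t - g u) / (t - u)) = slope g u := by
      funext t; rw [slope_def_field]
    rw [this]; exact h2
  have : (𝓝[Ioo u b] u).NeBot := neBot_Ioo_right hub
  refine le_of_tendsto_of_tendsto htenE htenG ?_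
  refine eventually_nhdsWithin_of_forall (fun t ht => ?_)
  have htmem : t ∈ Icc a b := ⟨hu.1.trans ht.1.le, ht.2.le⟩
  have h1 : E t - E u ≤ g t - g u := by
    have := hEle t htmem; rw [hcon]; linarith
  exact (div_le_div_iff_of_pos_right (by linarith [ht.1] : (0:ℝ) < t - u)).mpr h1

/-- At a contact point `u > a`, the envelope derivative is at least `deriv g u`. -/
lemma deriv_le_contact {a b u mu : ℝ} {E g : ℝ → ℝ}
    (hg : ContDiff ℝ 1 g)
    (hEle : ∀ x ∈ Icc a b, E x ≤ g x)
    (hu : u ∈ Icc a b) (hau : a < u) (hcon : E u = g u)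
    (hmE : HasDerivWithinAt E mu (Icc a b) u) :
    deriv g u ≤ mu := by
  have hsub : Ioo a u ⊆ Icc a b \ {u} := fun x hx =>
    ⟨⟨hx.1.le, hx.2.le.trans hu.2⟩, ne_of_lt hx.2⟩
  have htenE := tendsto_slope_sub hsub hmE
  have hgd : HasDerivAt g (deriv g u) u :=
    ((hg.differentiable one_ne_zero) u).hasDerivAt
  have htenG : Tendsto (fun t => (g t - g u) / (t - u)) (𝓝[Ioo a u] u) (𝓝 (deriv g u)) := by
    have h := hasDerivAt_iff_tendsto_slope.mp hgd
    have h2 := h.mono_left (nhdsWithin_mono _ (fun x hx => ne_of_lt hx.2 : Ioo a u ⊆ {u}ᶜ))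
    have : (fun t => (g t - g u) / (t - u)) = slope g u := by
      funext t; rw [slope_def_field]
    rw [this]; exact h2
  have : (𝓝[Ioo a u] u).NeBot := neBot_Ioo_left hau
  refine le_of_tendsto_of_tendsto htenG htenE ?_
  refine eventually_nhdsWithin_of_forall (fun t ht => ?_)
  have htmem : t ∈ Icc a b := ⟨ht.1.le, ht.2.le.trans hu.2⟩
  have h1 : E t - E u ≤ g t - g u := by
    have := hEle t htmem; rw [hcon]; linarith
  have hneg : t - u ≤ 0 := by linarith [ht.2]
  exact div_le_div_of_nonpos_of_le hneg h1

/-- slope comparison from derivative comparison -/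
lemma slope_mono_of_deriv_le {a b p s : ℝ} {g k : ℝ → ℝ}
    (hg : ContDiff ℝ 1 g) (hk : ContDiff ℝ 1 k)
    (hle : ∀ x ∈ Icc a b, deriv g x ≤ deriv k x)
    (hp : p ∈ Icc a b) (hs : s ∈ Icc a b) (hps : p < s) :
    (g s - g p) / (s - p) ≤ (k s - k p) / (s - p) := by
  have hmono : MonotoneOn (fun x => k x - g x) (Icc a b) := by
    apply monotoneOn_of_deriv_nonneg (convex_Icc a b)
    · exact ((hk.continuous.sub hg.continuous)).continuousOn
    · intro x hx
      exact (((hk.differentiable one_ne_zero) x).sub ((hg.differentiable one_ne_zero) x)).differentiableWithinAt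
    · intro x hx
      rw [interior_Icc] at hx
      rw [deriv_fun_sub ((hk.differentiable one_ne_zero) x) ((hg.differentiable one_ne_zero) x)]
      have := hle x ⟨hx.1.le, hx.2.le⟩
      linarith
  have := hmono hp hs hps.le
  have hnum : g s - g p ≤ k s - k p := by dsimp at this; linarith
  exact (div_le_div_iff_of_pos_right (by linarith : (0:ℝ) < s - p)).mpr hnum

/-- Structure of the greatest convex minorant: at a non-contact point it is affine
between two contact points. -/
lemma env_structure {a b : ℝ} (hab : a < b) {g E : ℝ → ℝ}
    (hgc : Continuous g)
    (hEconv : ConvexOn ℝ (Icc a b) E) (hEle : ∀ x ∈ Icc a b, E x ≤ g x)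
    (hEmax : ∀ φ : ℝ → ℝ, ConvexOn ℝ (Icc a b) φ → (∀ x ∈ Icc a b, φ x ≤ g x) →
      ∀ x ∈ Icc a b, φ x ≤ E x)
    (hEcont : ContinuousOn E (Icc a b))
    (hEa : E a = g a) (hEb : E b = g b)
    {u : ℝ} (hu : u ∈ Icc a b) (hlt : E u < g u) :
    ∃ p q, p ∈ Icc a b ∧ q ∈ Icc a b ∧ p < u ∧ u < q ∧ E p = g p ∧ E q = g q ∧
      ∀ x ∈ Icc p q, E x = E p + (E q - E p) / (q - p) * (x - p) := by
  have hau : a < u := by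
    rcases eq_or_lt_of_le hu.1 with h | h
    · exfalso; subst h; linarith
    · exact h
  have hub : u < b := by
    rcases eq_or_lt_of_le hu.2 with h | h
    · exfalso; subst h; linarith
    · exact h
  have hφ : ContinuousOn (fun x => E x - g x) (Icc a b) :=
    hEcont.sub hgc.continuousOn
  -- left contact point
  set SA := Icc a u ∩ (fun x => E x - g x) ⁻¹' {0} with hSA
  have hSAsub : Icc a u ⊆ Icc a b := Icc_subset_Icc le_rfl hu.2
  have hSAclosed : IsClosed SA :=
    (hφ.mono hSAsub).preimage_isClosed_of_isClosed isClosed_Icc isClosed_singleton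
  have hSAne : SA.Nonempty := ⟨a, ⟨le_rfl, hau.le⟩, by simp [hEa]⟩
  have hSAbdd : BddAbove SA := (bddAbove_Icc).mono (inter_subset_left)
  set p := sSup SA with hp
  have hpmem : p ∈ SA := hSAclosed.csSup_mem hSAne hSAbdd
  have hpIcc : p ∈ Icc a b := hSAsub hpmem.1
  have hpcon : E p = g p := by have := hpmem.2; simp at this; linarith
  have hpu : p < u := by
    rcases eq_or_lt_of_le hpmem.1.2 with h | h
    · exfalso; rw [h] at hpcon; linarith
    · exact h
  -- right contact point
  set SB := Icc u b ∩ (fun x => E x - g x) ⁻¹' {0} with hSB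
  have hSBsub : Icc u b ⊆ Icc a b := Icc_subset_Icc hu.1 le_rfl
  have hSBclosed : IsClosed SB :=
    (hφ.mono hSBsub).preimage_isClosed_of_isClosed isClosed_Icc isClosed_singleton
  have hSBne : SB.Nonempty := ⟨b, ⟨hub.le, le_rfl⟩, by simp [hEb]⟩
  have hSBbdd : BddBelow SB := (bddBelow_Icc).mono (inter_subset_left)
  set q := sInf SB with hq
  have hqmem : q ∈ SB := hSBclosed.csInf_mem hSBne hSBbdd
  have hqIcc : q ∈ Icc a b := hSBsub hqmem.1
  have hqcon : E q = g q := by have := hqmem.2; simp at this; linarith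
  have huq : u < q := by
    rcases eq_or_lt_of_le hqmem.1.1 with h | h
    · exfalso; rw [← h] at hqcon; linarith
    · exact h
  have hpq : p < q := hpu.trans huq
  -- no contact strictly inside (p, q)
  have hinside : ∀ x ∈ Ioo p q, E x < g x := by
    intro x hx
    have hxmem : x ∈ Icc a b := ⟨hpIcc.1.trans hx.1.le, hx.2.le.trans hqIcc.2⟩
    rcases lt_or_eq_of_le (hEle x hxmem) with h | h
    · exact h
    · exfalso
      rcases le_or_gt x u with hxu | hux
      · have : x ∈ SA := ⟨⟨hpIcc.1.trans hx.1.le, hxu⟩, by simp [h]⟩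
        have := le_csSup hSAbdd this
        rw [← hp] at this; linarith [hx.1]
      · have : x ∈ SB := ⟨⟨hux.le, hx.2.le.trans hqIcc.2⟩, by simp [h]⟩
        have := csInf_le hSBbdd this
        rw [← hq] at this; linarith [hx.2]
  -- the chord line
  set s₀ := (E q - E p) / (q - p) with hs₀
  set L := fun x => s₀ * x + (E p - s₀ * p) with hL
  have hqp : (q:ℝ) - p ≠ 0 := ne_of_gt (by linarith)
  have hLp : L p = E p := by simp only [hL]; ring
  have hLq : L q = E q := by
    simp only [hL, hs₀]
    field_simp
    ring
  -- L lies below E outside (p, q)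
  have hLleE : ∀ x ∈ Icc a b, (x ≤ p ∨ q ≤ x) → L x ≤ E x := by
    intro x hx hcase
    rcases hcase with hcase | hcase
    · rcases eq_or_lt_of_le hcase with h | h
      · rw [h, hLp]
      · have hsl := hEconv.slope_mono_adjacent hx hqIcc h hpq
        have hpx : (0:ℝ) < p - x := by linarith
        rw [div_le_div_iff₀ (by linarith) (by linarith)] at hsl
        have : L x = E p + s₀ * (x - p) := by simp [hL]; ring
        rw [this, hs₀]
        rw [div_mul_eq_mul_div, ← sub_nonneg]
        have h2 : (E q - E p) * (x - p) / (q - p) ≤ E x - E p := by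
          rw [div_le_iff₀ (by linarith : (0:ℝ) < q - p)]
          nlinarith
        linarith
    · rcases eq_or_lt_of_le hcase with h | h
      · rw [← h, hLq]
      · have hsl := hEconv.slope_mono_adjacent hpIcc hx hpq h
        rw [div_le_div_iff₀ (by linarith) (by linarith)] at hsl
        have : L x = E q + s₀ * (x - q) := by
          have : L x = L q + s₀ * (x - q) := by simp [hL]; ring
          rw [this, hLq]
        rw [this, hs₀]
        rw [div_mul_eq_mul_div, ← sub_nonneg]
        have h2 : (E q - E p) * (x - q) / (q - p) ≤ E x - E q := by
          rw [div_le_iff₀ (by linarith : (0:ℝ) < q - p)]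
          nlinarith
        linarith
  -- minimum of g - L on [p, q]
  obtain ⟨z₀, hz₀mem, hz₀min⟩ :=
    isCompact_Icc.exists_isMinOn (nonempty_Icc.mpr hpq.le)
      ((hgc.sub (by rw [hL]; exact (continuous_const.mul continuous_id).add continuous_const : Continuous L)).continuousOn)
  set c := g z₀ - L z₀ with hc
  have hcle : ∀ x ∈ Icc p q, L x + c ≤ g x := by
    intro x hx
    have h2 : g z₀ - L z₀ ≤ g x - L x := hz₀min hx
    simp only [hc]; linarith
  have hc0 : c ≤ 0 := by
    have h2 : g z₀ - L z₀ ≤ g p - L p := hz₀min (left_mem_Icc.mpr hpq.le)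
    rw [hLp, ← hpcon] at h2
    simp only [hc]; linarith
  -- the competitor max(E, L + c)
  set M := fun x => max (E x) (L x + c) with hM
  have hMconv : ConvexOn ℝ (Icc a b) M := by
    apply hEconv.sup
    have : (fun x => L x + c) = fun x => s₀ * x + (E p - s₀ * p + c) := by
      funext x; simp [hL]; ring
    rw [this]
    exact convexOn_affine _ _ (convex_Icc a b)
  have hMle : ∀ x ∈ Icc a b, M x ≤ g x := by
    intro x hx
    apply max_le (hEle x hx)
    rcases le_or_gt x p with h | h
    · have := hLleE x hx (Or.inl h)
      linarith [hEle x hx]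
    · rcases le_or_gt x q with h2 | h2
      · exact hcle x ⟨h.le, h2⟩
      · have := hLleE x hx (Or.inr h2.le)
        linarith [hEle x hx]
  have hME : ∀ x ∈ Icc a b, M x ≤ E x := hEmax M hMconv hMle
  -- conclude c = 0
  have hz₀Icc : z₀ ∈ Icc a b :=
    ⟨hpIcc.1.trans hz₀mem.1, hz₀mem.2.trans hqIcc.2⟩
  have hEz₀ : E z₀ = g z₀ := by
    have h1 : L z₀ + c ≤ M z₀ := le_max_right _ _
    have h2 := hME z₀ hz₀Icc
    have : g z₀ ≤ E z₀ := by simp only [hc] at h1 ⊢; linarith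
    linarith [hEle z₀ hz₀Icc]
  have hc0' : c = 0 := by
    rcases eq_or_lt_of_le hz₀mem.1 with h | h
    · simp only [hc]; rw [← h, hLp, ← hpcon]; ring
    · rcases eq_or_lt_of_le hz₀mem.2 with h2 | h2
      · simp only [hc]; rw [h2, hLq, ← hqcon]; ring
      · exfalso; exact absurd hEz₀ (ne_of_lt (hinside z₀ ⟨h, h2⟩))
  -- E equals L on [p, q]
  refine ⟨p, q, hpIcc, hqIcc, hpu, huq, hpcon, hqcon, fun x hx => ?_⟩
  have hxIcc : x ∈ Icc a b := ⟨hpIcc.1.trans hx.1, hx.2.trans hqIcc.2⟩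
  have hLx : L x ≤ E x := by
    have h1 : L x + c ≤ M x := le_max_right _ _
    have h2 := hME x hxIcc
    rw [hc0'] at h1; linarith
  have hxL : E x ≤ L x := by
    rcases eq_or_lt_of_le hx.1 with h | h
    · rw [← h, hLp]
    · rcases eq_or_lt_of_le hx.2 with h2 | h2
      · rw [h2, hLq]
      · have hsl := hEconv.slope_mono_adjacent hpIcc hqIcc h h2
        rw [div_le_div_iff₀ (by linarith) (by linarith)] at hsl
        have : L x = E p + s₀ * (x - p) := by simp [hL]; ring
        rw [this, hs₀, div_mul_eq_mul_div, ← sub_le_iff_le_add',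
          le_div_iff₀ (by linarith : (0:ℝ) < q - p)]
        nlinarith
  have : E x = L x := le_antisymm hxL hLx
  rw [this]
  simp only [hL, hs₀]; ring

/-- Left certificate: a contact point `p ≤ u` such that the slope from `p`
to any admissible `s` bounds the derivative from above. -/
lemma certE {a b : ℝ} (hab : a < b) {g E mE : ℝ → ℝ}
    (hgc : Continuous g)
    (hEconv : ConvexOn ℝ (Icc a b) E) (hEle : ∀ x ∈ Icc a b, E x ≤ g x)
    (hEmax : ∀ φ : ℝ → ℝ, ConvexOn ℝ (Icc a b) φ → (∀ x ∈ Icc a b, φ x ≤ g x) →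
      ∀ x ∈ Icc a b, φ x ≤ E x)
    (hEa : E a = g a) (hEb : E b = g b)
    (hmE : ∀ u ∈ Icc a b, HasDerivWithinAt E (mE u) (Icc a b) u)
    {u : ℝ} (hu : u ∈ Icc a b) :
    ∃ p, p ∈ Icc a b ∧ p ≤ u ∧ E p = g p ∧
      ∀ s ∈ Icc a b, u ≤ s → p < s → mE u ≤ (E s - E p) / (s - p) := by
  have hEcont : ContinuousOn E (Icc a b) :=
    fun x hx => (hmE x hx).continuousWithinAt
  by_cases hcon : E u = g u
  · exact ⟨u, hu, le_rfl, hcon, fun s hs hus hps =>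
      deriv_le_slope_right hEconv hu hs hps (hmE u hu)⟩
  · have hlt : E u < g u := lt_of_le_of_ne (hEle u hu) hcon
    obtain ⟨p, q, hpIcc, hqIcc, hpu, huq, hpcon, hqcon, haff⟩ :=
      env_structure hab hgc hEconv hEle hEmax hEcont hEa hEb hu hlt
    set s₀ := (E q - E p) / (q - p) with hs₀
    -- mE u = s₀
    have hL : HasDerivAt (fun x => E p + s₀ * (x - p)) s₀ u := by
      have h1 : HasDerivAt (fun x : ℝ => x - p) 1 u := (hasDerivAt_id u).sub_const p
      have h2 := (h1.const_mul s₀).const_add (E p)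
      simpa using h2
    have hEeq : HasDerivWithinAt E s₀ (Icc a b) u := by
      apply (hL.hasDerivWithinAt).congr_of_eventuallyEq
      · have hmem : Ioo p q ∈ 𝓝[Icc a b] u :=
          nhdsWithin_le_nhds (isOpen_Ioo.mem_nhds ⟨hpu, huq⟩)
        exact eventually_of_mem hmem (fun x hx => haff x ⟨hx.1.le, hx.2.le⟩)
      · exact haff u ⟨hpu.le, huq.le⟩
    have hmEu : mE u = s₀ := by
      rw [← (hmE u hu).derivWithin (uniqueDiffOn_Icc hab u hu),
        ← hEeq.derivWithin (uniqueDiffOn_Icc hab u hu)]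
    refine ⟨p, hpIcc, hpu.le, hpcon, fun s hs hus hps => ?_⟩
    rcases le_or_gt s q with hsq | hqs
    · have := haff s ⟨hps.le, hsq⟩
      rw [this, hmEu]
      have : E p + s₀ * (s - p) - E p = s₀ * (s - p) := by ring
      rw [this, mul_div_assoc, div_self (ne_of_gt (by linarith : (0:ℝ) < s - p)), mul_one]
    · have := hEconv.secant_mono_aux2 hpIcc hs (hpu.trans huq) hqs
      rw [hmEu]; exact this

/-- Right certificate: a contact point `s ≥ u` such that the slope from any
admissible `p` to `s` bounds the derivative from below. -/
lemma certF {a b : ℝ} (hab : a < b) {k F mF : ℝ → ℝ}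
    (hkc : Continuous k)
    (hFconv : ConvexOn ℝ (Icc a b) F) (hFle : ∀ x ∈ Icc a b, F x ≤ k x)
    (hFmax : ∀ φ : ℝ → ℝ, ConvexOn ℝ (Icc a b) φ → (∀ x ∈ Icc a b, φ x ≤ k x) →
      ∀ x ∈ Icc a b, φ x ≤ F x)
    (hFa : F a = k a) (hFb : F b = k b)
    (hmF : ∀ u ∈ Icc a b, HasDerivWithinAt F (mF u) (Icc a b) u)
    {u : ℝ} (hu : u ∈ Icc a b) :
    ∃ s, s ∈ Icc a b ∧ u ≤ s ∧ F s = k s ∧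
      ∀ p ∈ Icc a b, p ≤ u → p < s → (F s - F p) / (s - p) ≤ mF u := by
  have hFcont : ContinuousOn F (Icc a b) :=
    fun x hx => (hmF x hx).continuousWithinAt
  by_cases hcon : F u = k u
  · refine ⟨u, hu, le_rfl, hcon, fun p hp hpu hps => ?_⟩
    exact slope_left_le_deriv hFconv hu hp hps (hmF u hu)
  · have hlt : F u < k u := lt_of_le_of_ne (hFle u hu) hcon
    obtain ⟨p', q', hpIcc, hqIcc, hpu, huq, hpcon, hqcon, haff⟩ :=
      env_structure hab hkc hFconv hFle hFmax hFcont hFa hFb hu hlt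
    set s₀ := (F q' - F p') / (q' - p') with hs₀
    have hL : HasDerivAt (fun x => F p' + s₀ * (x - p')) s₀ u := by
      have h1 : HasDerivAt (fun x : ℝ => x - p') 1 u := (hasDerivAt_id u).sub_const p'
      have h2 := (h1.const_mul s₀).const_add (F p')
      simpa using h2
    have hFeq : HasDerivWithinAt F s₀ (Icc a b) u := by
      apply (hL.hasDerivWithinAt).congr_of_eventuallyEq
      · have hmem : Ioo p' q' ∈ 𝓝[Icc a b] u :=
          nhdsWithin_le_nhds (isOpen_Ioo.mem_nhds ⟨hpu, huq⟩)
        exact eventually_of_mem hmem (fun x hx => haff x ⟨hx.1.le, hx.2.le⟩)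
      · exact haff u ⟨hpu.le, huq.le⟩
    have hmFu : mF u = s₀ := by
      rw [← (hmF u hu).derivWithin (uniqueDiffOn_Icc hab u hu),
        ← hFeq.derivWithin (uniqueDiffOn_Icc hab u hu)]
    refine ⟨q', hqIcc, huq.le, hqcon, fun p hp hpu2 hps => ?_⟩
    rcases le_or_gt p' p with hpp | hpp
    · -- p on the affine piece
      have hform := haff p ⟨hpp, (hpu2.trans huq.le)⟩
      have hformq := haff q' ⟨(hpu.trans huq).le, le_rfl⟩
      rw [hform, hformq, hmFu]
      have : F p' + s₀ * (q' - p') - (F p' + s₀ * (p - p')) = s₀ * (q' - p) := by ring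
      rw [this, mul_div_assoc, div_self (ne_of_gt (by linarith : (0:ℝ) < q' - p)), mul_one]
    · -- p to the left of p'
      have := hFconv.secant_mono_aux3 hp hqIcc hpp (hpu.trans huq)
      rw [hmFu]; exact this

/-- Main comparison: if `deriv g ≤ deriv k` on `[a,b]`, the derivatives of the
greatest convex minorants compare likewise. -/
lemma main_comparison {a b : ℝ} (hab : a < b) {g k E F mE mF : ℝ → ℝ}
    (hg : ContDiff ℝ 1 g) (hk : ContDiff ℝ 1 k)
    (hEconv : ConvexOn ℝ (Icc a b) E) (hFconv : ConvexOn ℝ (Icc a b) F)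
    (hEle : ∀ x ∈ Icc a b, E x ≤ g x) (hFle : ∀ x ∈ Icc a b, F x ≤ k x)
    (hEmax : ∀ φ : ℝ → ℝ, ConvexOn ℝ (Icc a b) φ → (∀ x ∈ Icc a b, φ x ≤ g x) →
      ∀ x ∈ Icc a b, φ x ≤ E x)
    (hFmax : ∀ φ : ℝ → ℝ, ConvexOn ℝ (Icc a b) φ → (∀ x ∈ Icc a b, φ x ≤ k x) →
      ∀ x ∈ Icc a b, φ x ≤ F x)
    (hEa : E a = g a) (hEb : E b = g b) (hFa : F a = k a) (hFb : F b = k b)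
    (hmE : ∀ u ∈ Icc a b, HasDerivWithinAt E (mE u) (Icc a b) u)
    (hmF : ∀ u ∈ Icc a b, HasDerivWithinAt F (mF u) (Icc a b) u)
    (hle : ∀ x ∈ Icc a b, deriv g x ≤ deriv k x) :
    ∀ u ∈ Icc a b, mE u ≤ mF u := by
  -- interior case
  have hint : ∀ u ∈ Ioo a b, mE u ≤ mF u := by
    intro u hu
    have huIcc : u ∈ Icc a b := ⟨hu.1.le, hu.2.le⟩
    obtain ⟨p, hpIcc, hpu, hpcon, hpprop⟩ :=
      certE hab hg.continuous hEconv hEle hEmax hEa hEb hmE huIcc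
    obtain ⟨s, hsIcc, hus, hscon, hsprop⟩ :=
      certF hab hk.continuous hFconv hFle hFmax hFa hFb hmF huIcc
    by_cases hps : p < s
    · calc mE u ≤ (E s - E p) / (s - p) := hpprop s hsIcc hus hps
        _ ≤ (g s - g p) / (s - p) := by
            apply (div_le_div_iff_of_pos_right (by linarith : (0:ℝ) < s - p)).mpr
            have := hEle s hsIcc; rw [hpcon]; linarith
        _ ≤ (k s - k p) / (s - p) := slope_mono_of_deriv_le hg hk hle hpIcc hsIcc hps
        _ ≤ (F s - F p) / (s - p) := by
            apply (div_le_div_iff_of_pos_right (by linarith : (0:ℝ) < s - p)).mpr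
            have := hFle p hpIcc; rw [hscon]; linarith
        _ ≤ mF u := hsprop p hpIcc hpu hps
    · -- p = u = s : double contact
      have hpu' : p = u := le_antisymm hpu (by linarith [hus, not_lt.mp hps])
      have hsu : s = u := le_antisymm (by linarith [not_lt.mp hps, hpu]) hus
      have hconE : E u = g u := hpu' ▸ hpcon
      have hconF : F u = k u := hsu ▸ hscon
      calc mE u ≤ deriv g u := contact_deriv_le hg hEle huIcc hu.2 hconE (hmE u huIcc)
        _ ≤ deriv k u := hle u huIcc
        _ ≤ mF u := deriv_le_contact hk hFle huIcc hu.1 hconF (hmF u huIcc)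
  intro u hu
  rcases eq_or_lt_of_le hu.1 with hua | hua
  · -- u = a
    subst hua
    have key : ∀ t₀ ∈ Ioo a b, mE a ≤ (F t₀ - F a) / (t₀ - a) := by
      intro t₀ ht₀
      have ht₀Icc : t₀ ∈ Icc a b := ⟨ht₀.1.le, ht₀.2.le⟩
      have step : ∀ t ∈ Ioo a t₀, mE a ≤ (F t₀ - F t) / (t₀ - t) := by
        intro t ht
        have htIoo : t ∈ Ioo a b := ⟨ht.1, ht.2.trans ht₀.2⟩
        have htIcc : t ∈ Icc a b := ⟨ht.1.le, htIoo.2.le⟩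
        calc mE a ≤ (E t - E a) / (t - a) :=
              deriv_le_slope_right hEconv hu htIcc ht.1 (hmE a hu)
          _ ≤ mE t := slope_left_le_deriv hEconv htIcc hu ht.1 (hmE t htIcc)
          _ ≤ mF t := hint t htIoo
          _ ≤ (F t₀ - F t) / (t₀ - t) :=
              deriv_le_slope_right hFconv htIcc ht₀Icc ht.2 (hmF t htIcc)
      have : (𝓝[Ioo a t₀] a).NeBot := neBot_Ioo_right ht₀.1
      have htenF : Tendsto (fun t => (F t₀ - F t) / (t₀ - t)) (𝓝[Ioo a t₀] a)
          (𝓝 ((F t₀ - F a) / (t₀ - a))) := by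
        have hFc : Tendsto F (𝓝[Ioo a t₀] a) (𝓝 (F a)) :=
          ((hmF a hu).continuousWithinAt).mono_left
            (nhdsWithin_mono _ (fun x hx => ⟨hx.1.le, hx.2.le.trans ht₀.2.le⟩))
        have hid : Tendsto (fun t : ℝ => t) (𝓝[Ioo a t₀] a) (𝓝 a) :=
          (continuous_id.tendsto a).mono_left nhdsWithin_le_nhds
        exact (tendsto_const_nhds.sub hFc).div (tendsto_const_nhds.sub hid)
          (show t₀ - a ≠ 0 from sub_ne_zero.mpr (ne_of_gt ht₀.1))
      exact ge_of_tendsto htenF (eventually_nhdsWithin_of_forall step)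
    have : (𝓝[Ioo a b] a).NeBot := neBot_Ioo_right hab
    have hten : Tendsto (fun t₀ => (F t₀ - F a) / (t₀ - a)) (𝓝[Ioo a b] a) (𝓝 (mF a)) :=
      tendsto_slope_sub (fun x hx => ⟨⟨hx.1.le, hx.2.le⟩, ne_of_gt hx.1⟩) (hmF a hu)
    exact ge_of_tendsto hten (eventually_nhdsWithin_of_forall key)
  rcases eq_or_lt_of_le hu.2 with hub | hub
  · -- u = b
    subst hub
    have key : ∀ t₀ ∈ Ioo a u, (E u - E t₀) / (u - t₀) ≤ mF u := by
      intro t₀ ht₀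
      have ht₀Icc : t₀ ∈ Icc a u := ⟨ht₀.1.le, ht₀.2.le⟩
      have step : ∀ t ∈ Ioo t₀ u, (E t - E t₀) / (t - t₀) ≤ mF u := by
        intro t ht
        have htIoo : t ∈ Ioo a u := ⟨ht₀.1.trans ht.1, ht.2⟩
        have htIcc : t ∈ Icc a u := ⟨htIoo.1.le, ht.2.le⟩
        calc (E t - E t₀) / (t - t₀) = (E t - E t₀) / (t - t₀) := rfl
          _ ≤ mE t := slope_left_le_deriv hEconv htIcc ht₀Icc ht.1 (hmE t htIcc)
          _ ≤ mF t := hint t htIoo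
          _ ≤ (F u - F t) / (u - t) :=
              deriv_le_slope_right hFconv htIcc hu ht.2 (hmF t htIcc)
          _ ≤ mF u := slope_left_le_deriv hFconv hu htIcc ht.2 (hmF u hu)
      have : (𝓝[Ioo t₀ u] u).NeBot := neBot_Ioo_left ht₀.2
      have htenE : Tendsto (fun t => (E t - E t₀) / (t - t₀)) (𝓝[Ioo t₀ u] u)
          (𝓝 ((E u - E t₀) / (u - t₀))) := by
        have hEc : Tendsto E (𝓝[Ioo t₀ u] u) (𝓝 (E u)) :=
          ((hmE u hu).continuousWithinAt).mono_left
            (nhdsWithin_mono _ (fun x hx => ⟨ht₀.1.le.trans hx.1.le, hx.2.le⟩))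
        have hid : Tendsto (fun t : ℝ => t) (𝓝[Ioo t₀ u] u) (𝓝 u) :=
          (continuous_id.tendsto u).mono_left nhdsWithin_le_nhds
        exact (hEc.sub tendsto_const_nhds).div (hid.sub tendsto_const_nhds)
          (show u - t₀ ≠ 0 from sub_ne_zero.mpr (ne_of_gt ht₀.2))
      exact le_of_tendsto htenE (eventually_nhdsWithin_of_forall step)
    have : (𝓝[Ioo a u] u).NeBot := neBot_Ioo_left hab
    have hten : Tendsto (fun t₀ => (E t₀ - E u) / (t₀ - u)) (𝓝[Ioo a u] u) (𝓝 (mE u)) :=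
      tendsto_slope_sub (fun x hx => ⟨⟨hx.1.le, hx.2.le⟩, ne_of_lt hx.2⟩) (hmE u hu)
    refine le_of_tendsto hten (eventually_nhdsWithin_of_forall (fun t₀ ht₀ => ?_))
    have h1 := key t₀ ht₀
    have h2 : (E t₀ - E u) / (t₀ - u) = (E u - E t₀) / (u - t₀) := by
      rw [← neg_div_neg_eq]; ring_nf
    rw [h2]; exact h1
  · exact hint u ⟨hua, hub⟩

lemma convexOn_linear (A : ℝ) {s : Set ℝ} (hs : Convex ℝ s) :
    ConvexOn ℝ s (fun x => A * x) := by
  have := convexOn_affine A 0 hs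
  simpa using this

/-! ### Basic properties of `convEnv` -/

section convEnvBasic

variable {a b : ℝ} {g : ℝ → ℝ}

lemma convEnv_set_nonempty (hab : a ≤ b) (hgc : Continuous g) (u : ℝ) :
    {y : ℝ | ∃ h : ℝ → ℝ, ConvexOn ℝ (Set.Icc a b) h ∧
      (∀ x ∈ Set.Icc a b, h x ≤ g x) ∧ y = h u}.Nonempty := by
  obtain ⟨x₀, hx₀, hmin⟩ := isCompact_Icc.exists_isMinOn (nonempty_Icc.mpr hab)
    (hgc.continuousOn (s := Icc a b))
  exact ⟨g x₀, fun _ => g x₀, convexOn_const _ (convex_Icc a b),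
    fun x hx => hmin hx, rfl⟩

lemma convEnv_bddAbove {u : ℝ} (hu : u ∈ Icc a b) :
    BddAbove {y : ℝ | ∃ h : ℝ → ℝ, ConvexOn ℝ (Set.Icc a b) h ∧
      (∀ x ∈ Set.Icc a b, h x ≤ g x) ∧ y = h u} := by
  refine ⟨g u, fun y hy => ?_⟩
  obtain ⟨h, _, hle, rfl⟩ := hy
  exact hle u hu

lemma convEnv_le (hab : a ≤ b) (hgc : Continuous g) {u : ℝ} (hu : u ∈ Icc a b) :
    convEnv a b g u ≤ g u := by
  apply csSup_le (convEnv_set_nonempty hab hgc u)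
  rintro y ⟨h, _, hle, rfl⟩
  exact hle u hu

lemma le_convEnv {φ : ℝ → ℝ} (hφ : ConvexOn ℝ (Icc a b) φ)
    (hle : ∀ x ∈ Icc a b, φ x ≤ g x) {u : ℝ} (hu : u ∈ Icc a b) :
    φ u ≤ convEnv a b g u :=
  le_csSup (convEnv_bddAbove hu) ⟨φ, hφ, hle, rfl⟩

lemma convEnv_convexOn (hab : a ≤ b) (hgc : Continuous g) :
    ConvexOn ℝ (Icc a b) (convEnv a b g) := by
  refine ⟨convex_Icc a b, fun x hx y hy p q hp hq hpq => ?_⟩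
  have hmem : p • x + q • y ∈ Icc a b := (convex_Icc a b) hx hy hp hq hpq
  apply csSup_le (convEnv_set_nonempty hab hgc _)
  rintro z ⟨φ, hφconv, hφle, rfl⟩
  calc φ (p • x + q • y) ≤ p • φ x + q • φ y := hφconv.2 hx hy hp hq hpq
    _ ≤ p • convEnv a b g x + q • convEnv a b g y := by
        simp only [smul_eq_mul]
        have h1 := le_convEnv hφconv hφle hx
        have h2 := le_convEnv hφconv hφle hy
        nlinarith

lemma convEnv_left (hab : a < b) (hg : ContDiff ℝ 1 g) :
    convEnv a b g a = g a := by
  obtain ⟨x₀, hx₀, hmin⟩ := isCompact_Icc.exists_isMinOn (nonempty_Icc.mpr hab.le)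
    ((hg.continuous_deriv le_rfl).continuousOn (s := Icc a b))
  set m := deriv g x₀ with hm
  set ℓ := fun x => m * x + (g a - m * a) with hℓ
  have hℓa : ℓ a = g a := by simp [hℓ]
  have hℓle : ∀ x ∈ Icc a b, ℓ x ≤ g x := by
    intro x hx
    rcases eq_or_lt_of_le hx.1 with h | h
    · rw [← h, hℓa]
    · obtain ⟨c, hc, hslope⟩ := exists_deriv_eq_slope g h
        (hg.continuous.continuousOn) (fun y hy => ((hg.differentiable one_ne_zero) y).differentiableWithinAt)
      have hcmem : c ∈ Icc a b := ⟨hc.1.le, hc.2.le.trans hx.2⟩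
      have h1 : m ≤ deriv g c := hmin hcmem
      rw [eq_div_iff (ne_of_gt (sub_pos.mpr h))] at hslope
      have h2 : g x - g a = deriv g c * (x - a) := by linarith [hslope]
      have : ℓ x = g a + m * (x - a) := by simp [hℓ]; ring
      rw [this]
      nlinarith [h1, h2, sub_pos.mpr h]
  have h1 : convEnv a b g a ≤ g a := convEnv_le hab.le hg.continuous (left_mem_Icc.mpr hab.le)
  have h2 : g a ≤ convEnv a b g a := by
    rw [← hℓa]
    exact le_convEnv (convexOn_affine m _ (convex_Icc a b)) hℓle (left_mem_Icc.mpr hab.le)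
  linarith

lemma convEnv_right (hab : a < b) (hg : ContDiff ℝ 1 g) :
    convEnv a b g b = g b := by
  obtain ⟨x₀, hx₀, hmax⟩ := isCompact_Icc.exists_isMaxOn (nonempty_Icc.mpr hab.le)
    ((hg.continuous_deriv le_rfl).continuousOn (s := Icc a b))
  set m := deriv g x₀ with hm
  set ℓ := fun x => m * x + (g b - m * b) with hℓ
  have hℓb : ℓ b = g b := by simp [hℓ]
  have hℓle : ∀ x ∈ Icc a b, ℓ x ≤ g x := by
    intro x hx
    rcases eq_or_lt_of_le hx.2 with h | h
    · rw [h, hℓb]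
    · obtain ⟨c, hc, hslope⟩ := exists_deriv_eq_slope g h
        (hg.continuous.continuousOn) (fun y hy => ((hg.differentiable one_ne_zero) y).differentiableWithinAt)
      have hcmem : c ∈ Icc a b := ⟨hx.1.trans hc.1.le, hc.2.le⟩
      have h1 : deriv g c ≤ m := hmax hcmem
      rw [eq_div_iff (ne_of_gt (sub_pos.mpr h))] at hslope
      have h2 : g b - g x = deriv g c * (b - x) := by linarith [hslope]
      have : ℓ x = g b + m * (x - b) := by simp [hℓ]; ring
      rw [this]
      nlinarith [h1, h2, sub_pos.mpr h]
  have h1 : convEnv a b g b ≤ g b := convEnv_le hab.le hg.continuous (right_mem_Icc.mpr hab.le)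
  have h2 : g b ≤ convEnv a b g b := by
    rw [← hℓb]
    exact le_convEnv (convexOn_affine m _ (convex_Icc a b)) hℓle (right_mem_Icc.mpr hab.le)
  linarith

end convEnvBasic

lemma one_side (a b : ℝ) (hab : a < b) (g h : ℝ → ℝ)
    (hg : ContDiff ℝ 1 g) (hh : ContDiff ℝ 1 h) (m₁ m₂ : ℝ → ℝ)
    (hm₁ : ∀ u ∈ Set.Icc a b, HasDerivWithinAt (convEnv a b g) (m₁ u) (Set.Icc a b) u)
    (hm₂ : ∀ u ∈ Set.Icc a b, HasDerivWithinAt (convEnv a b h) (m₂ u) (Set.Icc a b) u)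
    (C : ℝ) (hC : ∀ x ∈ Set.Icc a b, deriv g x ≤ deriv h x + C) :
    ∀ u ∈ Set.Icc a b, m₁ u ≤ m₂ u + C := by
  have hk : ContDiff ℝ 1 (fun x => h x + C * x) :=
    hh.add (contDiff_const.mul contDiff_id)
  have hFconv : ConvexOn ℝ (Icc a b) (fun x => convEnv a b h x + C * x) :=
    (convEnv_convexOn hab.le hh.continuous).add (convexOn_linear C (convex_Icc a b))
  have hFmax : ∀ φ : ℝ → ℝ, ConvexOn ℝ (Icc a b) φ →
      (∀ x ∈ Icc a b, φ x ≤ h x + C * x) →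
      ∀ x ∈ Icc a b, φ x ≤ convEnv a b h x + C * x := by
    intro φ hconv hle x hx
    have hconv2 : ConvexOn ℝ (Icc a b) (fun y => φ y + (-C) * y) :=
      hconv.add (convexOn_linear (-C) (convex_Icc a b))
    have hle2 : ∀ y ∈ Icc a b, φ y + (-C) * y ≤ h y := by
      intro y hy; have := hle y hy; linarith
    have := le_convEnv hconv2 hle2 hx
    linarith
  have hmF : ∀ u ∈ Icc a b,
      HasDerivWithinAt (fun x => convEnv a b h x + C * x) (m₂ u + C) (Icc a b) u := by
    intro u hu
    have h2 : HasDerivAt (fun x : ℝ => C * x) (C * 1) u := (hasDerivAt_id u).const_mul C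
    have := (hm₂ u hu).add h2.hasDerivWithinAt; rw [mul_one] at this; exact this
  have hle : ∀ x ∈ Icc a b, deriv g x ≤ deriv (fun y => h y + C * y) x := by
    intro x hx
    have hd : deriv (fun y => h y + C * y) x = deriv h x + C := by
      rw [deriv_fun_add ((hh.differentiable one_ne_zero) x) (by fun_prop : DifferentiableAt ℝ (fun y : ℝ => C * y) x)]
      congr 1
      exact (((hasDerivAt_id x).const_mul C).deriv).trans (mul_one C)
    rw [hd]; exact hC x hx
  have hFa : (fun x => convEnv a b h x + C * x) a = (fun x => h x + C * x) a := by
    simp only []; rw [convEnv_left hab hh]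
  have hFb : (fun x => convEnv a b h x + C * x) b = (fun x => h x + C * x) b := by
    simp only []; rw [convEnv_right hab hh]
  exact main_comparison hab hg hk
    (convEnv_convexOn hab.le hg.continuous) hFconv
    (fun x hx => convEnv_le hab.le hg.continuous hx)
    (fun x hx => add_le_add_left (convEnv_le hab.le hh.continuous hx) _)
    (fun φ hconv hle' x hx => le_convEnv hconv hle' hx)
    hFmax
    (convEnv_left hab hg) (convEnv_right hab hg) hFa hFb
    hm₁ hmF hle

theorem stmt7 (a b : ℝ) (hab : a < b) (g h : ℝ → ℝ)
    (hg : ContDiff ℝ 1 g) (hh : ContDiff ℝ 1 h) (m₁ m₂ : ℝ → ℝ)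
    (hm₁ : ∀ u ∈ Set.Icc a b,
      HasDerivWithinAt (convEnv a b g) (m₁ u) (Set.Icc a b) u)
    (hm₂ : ∀ u ∈ Set.Icc a b,
      HasDerivWithinAt (convEnv a b h) (m₂ u) (Set.Icc a b) u)
    (C : ℝ) (hC : ∀ x ∈ Set.Icc a b, |deriv g x - deriv h x| ≤ C) :
    ∀ u ∈ Set.Icc a b, |m₁ u - m₂ u| ≤ C := by
  intro u hu
  have A := one_side a b hab g h hg hh m₁ m₂ hm₁ hm₂ C
    (fun x hx => by have := abs_le.mp (hC x hx); linarith [this.2]) u hu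
  have B := one_side a b hab h g hh hg m₂ m₁ hm₂ hm₁ C
    (fun x hx => by have := abs_le.mp (hC x hx); linarith [this.1]) u hu
  exact abs_le.mpr ⟨by linarith, by linarith⟩
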